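/- arXiv:2604.25703 — 2 statements merged into one kernel-verified Lean document; each statement's English description precedes it below -/
import Mathlib

section
/- Let r : ℝ → ℂ be continuous with 1 − 2σ|r(k)|² > 0 for all real k (σ = ±1), with ln(1 − 2σ|r(·)|²) integrable on (−∞, −k₀] for a fixed k₀ > 0. Define δ(k) = exp( (1/(2πi)) ∫_{−∞}^{−k₀} ln(1 − 2σ|r(s)|²)/(s − k) ds ) for k ∈ ℂ ∖ (−∞, −k₀]. Then δ is holomorphic on ℂ ∖ (−∞, −k₀] and satisfies δ(k̄)̄ = δ(k)⁻¹ there. -/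
open MeasureTheory Set Metric

lemma cauchy_diffOn (k₀ : ℝ) (f : ℝ → ℝ) (hfc : Continuous f)
    (hf : IntegrableOn f (Set.Iic (-k₀))) :
    DifferentiableOn ℂ (fun k : ℂ => ∫ s in Set.Iic (-k₀), (f s : ℂ) / ((s : ℂ) - k))
      {k : ℂ | ¬(k.im = 0 ∧ k.re ≤ -k₀)} := by
  set C : Set ℂ := {w : ℂ | w.im = 0 ∧ w.re ≤ -k₀} with hC
  have hCclosed : IsClosed C := by
    have : C = (Complex.im ⁻¹' {0}) ∩ (Complex.re ⁻¹' Set.Iic (-k₀)) := by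
      ext w; simp [hC, Set.mem_setOf_eq]
    rw [this]
    exact (isClosed_singleton.preimage Complex.continuous_im).inter
      (isClosed_Iic.preimage Complex.continuous_re)
  have hU : IsOpen {k : ℂ | ¬(k.im = 0 ∧ k.re ≤ -k₀)} := hCclosed.isOpen_compl
  intro z hz
  have hzC : z ∉ C := hz
  have hCne : C.Nonempty := ⟨(-k₀ : ℝ), by simp [hC]⟩
  set d : ℝ := infDist z C with hd
  have hd0 : 0 < d := (hCclosed.notMem_iff_infDist_pos hCne).1 hzC
  set ε : ℝ := d / 2 with hε
  have hε0 : 0 < ε := by positivity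
  have hest : ∀ s : ℝ, s ∈ Set.Iic (-k₀) → ∀ x ∈ ball z ε, ε ≤ ‖(s : ℂ) - x‖ := by
    intro s hs x hx
    have hsC : (s : ℂ) ∈ C := by simp only [hC, Set.mem_setOf_eq, Complex.ofReal_im, Complex.ofReal_re]; exact ⟨trivial, hs⟩
    have h1 : d ≤ ‖(s : ℂ) - z‖ := by
      have := infDist_le_dist_of_mem (x := z) hsC
      rwa [dist_comm, dist_eq_norm] at this
    have h2 : ‖z - x‖ < ε := by rwa [mem_ball', dist_eq_norm] at hx
    have h3 : ‖(s : ℂ) - z‖ ≤ ‖(s : ℂ) - x‖ + ‖z - x‖ := by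
      have := norm_sub_le ((s : ℂ) - x) (z - x)
      simpa [sub_sub_sub_cancel_right] using this
    simp only [hε] at h2 ⊢
    linarith
  have key := hasDerivAt_integral_of_dominated_loc_of_deriv_le (μ := volume.restrict (Set.Iic (-k₀)))
    (F := fun (x : ℂ) (s : ℝ) => (f s : ℂ) / ((s : ℂ) - x))
    (F' := fun (x : ℂ) (s : ℝ) => (f s : ℂ) / ((s : ℂ) - x) ^ 2)
    (x₀ := z) (bound := fun s => |f s| / ε ^ 2) (ball_mem_nhds z hε0)
    ?_ ?_ ?_ ?_ ?_ ?_
  · exact (key.2.differentiableAt).differentiableWithinAt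
  · -- measurability of F x for x near z
    filter_upwards with x
    exact (((Complex.measurable_ofReal.comp hfc.measurable)).div
      ((Complex.measurable_ofReal.sub measurable_const))).aestronglyMeasurable
  · -- integrability of F z
    refine Integrable.mono' ((hf.norm).div_const ε) ?_ ?_
    · exact (((Complex.measurable_ofReal.comp hfc.measurable)).div
        ((Complex.measurable_ofReal.sub measurable_const))).aestronglyMeasurable
    · filter_upwards [ae_restrict_mem measurableSet_Iic] with s hs
      have h1 : ε ≤ ‖(s : ℂ) - z‖ := hest s hs z (mem_ball_self hε0)
      rw [norm_div, Complex.norm_real]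
      gcongr
  · -- measurability of F' z
    exact (((Complex.measurable_ofReal.comp hfc.measurable)).div
      (((Complex.measurable_ofReal.sub measurable_const)).pow measurable_const)).aestronglyMeasurable
  · -- bound
    filter_upwards [ae_restrict_mem measurableSet_Iic] with s hs x hx
    have h1 : ε ≤ ‖(s : ℂ) - x‖ := hest s hs x hx
    rw [norm_div, Complex.norm_real, norm_pow]
    rw [Real.norm_eq_abs]
    gcongr
  · exact (hf.norm).div_const _
  · -- differentiability
    filter_upwards [ae_restrict_mem measurableSet_Iic] with s hs x hx
    have h1 : ε ≤ ‖(s : ℂ) - x‖ := hest s hs x hx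
    have hne : (s : ℂ) - x ≠ 0 := by
      intro h; rw [h, norm_zero] at h1; linarith
    have h2 : HasDerivAt (fun x : ℂ => (s : ℂ) - x) (-1) x := by
      simpa using (hasDerivAt_id x).const_sub (s : ℂ)
    have h3 := (h2.inv hne).const_mul ((f s : ℂ))
    have hval : (f s : ℂ) * (-(-1) / ((s : ℂ) - x) ^ 2) = (f s : ℂ) / ((s : ℂ) - x) ^ 2 := by
      ring
    have hfun : (fun x : ℂ => (f s : ℂ) * ((s : ℂ) - x)⁻¹)
        = fun x : ℂ => (f s : ℂ) / ((s : ℂ) - x) := by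
      funext y; rw [div_eq_mul_inv]
    rw [hval] at h3
    rw [← hfun]
    exact h3

/-- The Cauchy-integral function `δ` is holomorphic off the cut `(-∞, -k₀]` and
satisfies the conjugation symmetry `conj (δ (conj k)) = δ(k)⁻¹`. -/
theorem delta_holomorphic_and_symmetric (σ : ℝ) (hσ : σ = 1 ∨ σ = -1)
    (k₀ : ℝ) (hk₀ : 0 < k₀) (r : ℝ → ℂ) (hr : Continuous r)
    (hpos : ∀ k : ℝ, 0 < 1 - 2 * σ * ‖r k‖ ^ 2)
    (hint : IntegrableOn (fun s => Real.log (1 - 2 * σ * ‖r s‖ ^ 2))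
      (Set.Iic (-k₀)))
    (δ : ℂ → ℂ)
    (hδ : ∀ k : ℂ, δ k = Complex.exp ((1 / (2 * Real.pi * Complex.I)) *
      ∫ s in Set.Iic (-k₀),
        (Real.log (1 - 2 * σ * ‖r s‖ ^ 2) : ℂ) / ((s : ℂ) - k))) :
    DifferentiableOn ℂ δ {k : ℂ | ¬(k.im = 0 ∧ k.re ≤ -k₀)} ∧
    ∀ k ∈ {k : ℂ | ¬(k.im = 0 ∧ k.re ≤ -k₀)},
      starRingEnd ℂ (δ (starRingEnd ℂ k)) = (δ k)⁻¹ := by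
  set f : ℝ → ℝ := fun s => Real.log (1 - 2 * σ * ‖r s‖ ^ 2) with hfdef
  have hfc : Continuous f :=
    (continuous_const.sub (continuous_const.mul ((hr.norm).pow 2))).log
      (fun k => (hpos k).ne')
  set c : ℂ := 1 / (2 * Real.pi * Complex.I) with hcdef
  set g : ℂ → ℂ := fun k => ∫ s in Set.Iic (-k₀), (f s : ℂ) / ((s : ℂ) - k) with hgdef
  have hδ' : ∀ k : ℂ, δ k = Complex.exp (c * g k) := hδ
  have hgsymm : ∀ k : ℂ, starRingEnd ℂ (g (starRingEnd ℂ k)) = g k := by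
    intro k
    rw [hgdef]
    simp only
    rw [← integral_conj]
    congr 1
    funext s
    rw [map_div₀, Complex.conj_ofReal, map_sub, Complex.conj_ofReal, Complex.conj_conj]
  have hcconj : starRingEnd ℂ c = -c := by
    rw [hcdef]
    rw [map_div₀, map_one, map_mul, map_mul, Complex.conj_I, Complex.conj_ofReal]
    simp only [map_ofNat]
    rw [mul_neg, div_neg, neg_div']
  constructor
  · have D := cauchy_diffOn k₀ f hfc hint
    have D2 : DifferentiableOn ℂ (fun k => Complex.exp (c * g k))
        {k : ℂ | ¬(k.im = 0 ∧ k.re ≤ -k₀)} := (D.const_mul c).cexp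
    exact D2.congr (fun k hk => hδ' k)
  · intro k hk
    rw [hδ' (starRingEnd ℂ k), hδ' k, ← Complex.exp_conj, map_mul, hcconj, hgsymm,
      neg_mul, Complex.exp_neg]
end

section
/- Assume f : (−∞, −k₀] → ℝ is C¹ with f and f' integrable, and define χ(k) = (1/(2πi)) ∫_{−∞}^{−k₀} ln_π(k − s) f'(s) ds, where ln_π is the principal branch of the logarithm with argument in (−π, π). Then there is a constant C (independent of k) such that |χ(k) − χ(−k₀)| ≤ C |k + k₀| (1 + |ln|k + k₀||) for all k in the upper half-plane approaching −k₀ nontangentially with |k + k₀| ≤ 1/2. -/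
open MeasureTheory Set

lemma aux_log_bound {a : ℝ} (ha : 0 < a) (ha1 : a ≤ 1) (n : ℕ) :
    ∫ t in Ioc (a / (n+1)) a, |Real.log t| ≤ a - a * Real.log a := by
  have hε : 0 < a / (n+1) := by positivity
  have hεa : a / (n+1) ≤ a := by
    apply div_le_self ha.le; linarith [Nat.cast_nonneg (α := ℝ) n]
  have h1 : ∫ t in Ioc (a / (n+1)) a, |Real.log t| = ∫ t in Ioc (a/(n+1)) a, -Real.log t := by
    apply setIntegral_congr_fun measurableSet_Ioc
    intro t ht
    simp only []
    rw [abs_of_nonpos (Real.log_nonpos (le_of_lt (lt_of_lt_of_le hε ht.1.le)) (ht.2.trans ha1))]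
  rw [h1]
  rw [← intervalIntegral.integral_of_le hεa, intervalIntegral.integral_neg,
    integral_log]
  have h2 : (a/(n+1)) * Real.log (a/(n+1)) ≤ a/(n+1) := by
    have := Real.log_nonpos hε.le (hεa.trans ha1)
    nlinarith
  linarith

lemma aux_log_integrableOn {a : ℝ} (ha : 0 < a) (ha1 : a ≤ 1) :
    IntegrableOn (fun t => |Real.log t|) (Ioc 0 a) := by
  have hε : ∀ n : ℕ, (0:ℝ) < a / (n+1) := fun n => by positivity
  apply integrableOn_Ioc_of_intervalIntegral_norm_bounded_left
    (a := fun n : ℕ => a / (n+1)) (I := a - a * Real.log a) (l := Filter.atTop)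
  · intro n
    apply (ContinuousOn.integrableOn_Icc ?_).mono_set Ioc_subset_Icc_self
    exact (Real.continuousOn_log.mono (fun t ht => ne_of_gt (lt_of_lt_of_le (hε n) ht.1))).abs
  · have : Filter.Tendsto (fun n : ℕ => a * (1 / ((n:ℝ)+1))) Filter.atTop (nhds (a * 0)) :=
      tendsto_one_div_add_atTop_nhds_zero_nat.const_mul a
    simpa [div_eq_mul_inv] using this
  · filter_upwards with n
    simpa [Real.norm_eq_abs, abs_abs] using aux_log_bound ha ha1 n

lemma aux_log_intervalIntegral_le {a : ℝ} (ha : 0 < a) (ha1 : a ≤ 1) :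
    ∫ t in (0:ℝ)..a, |Real.log t| ≤ a * (1 + |Real.log a|) := by
  rw [intervalIntegral.integral_of_le ha.le]
  have hmono : Monotone (fun n : ℕ => Ioc (a/(n+1)) a) := by
    intro m n hmn
    apply Ioc_subset_Ioc_left
    apply div_le_div_of_nonneg_left ha.le (by positivity)
    linarith [(Nat.cast_le (α := ℝ)).mpr hmn]
  have hunion : (⋃ n : ℕ, Ioc (a/(n+1)) a) = Ioc 0 a := by
    ext t
    simp only [mem_iUnion, mem_Ioc]
    constructor
    · rintro ⟨n, h1, h2⟩; exact ⟨lt_trans (by positivity) h1, h2⟩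
    · rintro ⟨h1, h2⟩
      obtain ⟨n, hn⟩ := exists_nat_gt (a / t)
      refine ⟨n, ?_, h2⟩
      rw [div_lt_iff₀ (by positivity)]
      rw [div_lt_iff₀ h1] at hn
      nlinarith
  have hint := aux_log_integrableOn ha ha1
  have := MeasureTheory.tendsto_setIntegral_of_monotone
    (f := fun t => |Real.log t|) (s := fun n : ℕ => Ioc (a/(n+1)) a)
    (fun n => measurableSet_Ioc) hmono (by rwa [hunion])
  rw [hunion] at this
  have hlast : a - a * Real.log a ≤ a * (1 + |Real.log a|) := by
    have : -Real.log a ≤ |Real.log a| := neg_le_abs _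
    nlinarith
  exact le_trans (le_of_tendsto' this (fun n => aux_log_bound ha ha1 n)) hlast

lemma aux_log_intervalIntegrable {a : ℝ} (ha : 0 ≤ a) (ha1 : a ≤ 1) :
    IntervalIntegrable (fun t => |Real.log t|) volume 0 a := by
  rcases eq_or_lt_of_le ha with h | h
  · rw [← h]
  · rw [intervalIntegrable_iff_integrableOn_Ioc_of_le ha]
    exact aux_log_integrableOn h ha1

lemma aux_norm_log_le (z : ℂ) : ‖Complex.log z‖ ≤ |Real.log (‖z‖)| + Real.pi := by
  refine le_trans (Complex.norm_le_abs_re_add_abs_im _) ?_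
  rw [Complex.log_re, Complex.log_im]
  exact add_le_add le_rfl (Complex.abs_arg_le_pi z)

lemma aux_norm_log_ofReal {w : ℝ} (hw : 0 ≤ w) : ‖Complex.log (w:ℂ)‖ = |Real.log w| := by
  rcases eq_or_lt_of_le hw with h | h
  · simp [← h]
  · rw [← Complex.ofReal_log hw, Complex.norm_real, Real.norm_eq_abs]

lemma aux_far {ζ : ℂ} (hζ : 0 < ζ.im) {w : ℝ} (hw : 0 < w) (h2 : 2 * ‖ζ‖ ≤ w) :
    ‖Complex.log (ζ + (w:ℂ)) - Complex.log (w:ℂ)‖ ≤ (3/2) * (‖ζ‖ / w) := by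
  have hwne : (w:ℂ) ≠ 0 := by exact_mod_cast ne_of_gt hw
  have hnorm : ‖ζ / (w:ℂ)‖ = ‖ζ‖ / w := by
    rw [norm_div, Complex.norm_real, Real.norm_eq_abs,
      abs_of_pos hw]
  have hhalf : ‖ζ / (w:ℂ)‖ ≤ 1/2 := by
    rw [hnorm, div_le_iff₀ hw]; linarith
  have h1ne : (1 : ℂ) + ζ / w ≠ 0 := by
    intro h
    have : ((1 : ℂ) + ζ / w).im = 0 := by rw [h]; simp
    rw [Complex.add_im, Complex.one_im, Complex.div_ofReal_im] at this
    have : ζ.im = 0 := by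
      field_simp at this; simpa using this
    linarith
  have key : Complex.log (ζ + (w:ℂ)) = Real.log w + Complex.log (1 + ζ/w) := by
    have heq : ζ + (w:ℂ) = (1 + ζ/w) * w := by field_simp; ring
    rw [heq, Complex.log_mul_ofReal w hw _ h1ne]
  rw [key, ← Complex.ofReal_log hw.le]
  have : (Real.log w : ℂ) + Complex.log (1 + ζ/w) - (Real.log w : ℂ) =
      Complex.log (1 + ζ/w) := by ring
  rw [this, ← hnorm]
  exact Complex.norm_log_one_add_half_le_self hhalf

lemma aux_near' {ζ : ℂ} (hζ : 0 < ζ.im) {c : ℝ} (hc : 1 ≤ c) (hcim : ‖ζ‖ ≤ c * ζ.im)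
    {w : ℝ} (hw0 : 0 ≤ w) (hw2 : w ≤ 2 * ‖ζ‖) :
    |Real.log (‖ζ + (w:ℂ)‖)| ≤
      |Real.log (‖ζ‖)| + (Real.log 3 + Real.log c) := by
  set δ := ‖ζ‖ with hδ
  have hζne : ζ ≠ 0 := fun h => by simp [h] at hζ
  have hδpos : 0 < δ := by rwa [hδ, norm_pos_iff]
  have hcpos : 0 < c := lt_of_lt_of_le one_pos hc
  have himpos : 0 < (ζ + (w:ℂ)).im := by simpa using hζ
  have habspos : 0 < ‖ζ + (w:ℂ)‖ := by
    rw [norm_pos_iff]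
    intro h; rw [h] at himpos; simp at himpos
  have hlow : δ / c ≤ ‖ζ + (w:ℂ)‖ := by
    have h1 : (ζ + (w:ℂ)).im ≤ ‖ζ + (w:ℂ)‖ :=
      le_trans (le_abs_self _) (Complex.abs_im_le_norm _)
    have h2 : δ / c ≤ ζ.im := by rw [div_le_iff₀ hcpos]; linarith [hcim]
    have h3 : (ζ + (w:ℂ)).im = ζ.im := by simp
    rw [h3] at h1
    exact le_trans h2 h1
  have hup : ‖ζ + (w:ℂ)‖ ≤ 3 * δ := by
    refine le_trans (norm_add_le _ _) ?_
    rw [Complex.norm_real, Real.norm_eq_abs, abs_of_nonneg hw0]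
    linarith
  have h1 : Real.log δ - Real.log c ≤ Real.log (‖ζ + (w:ℂ)‖) := by
    rw [← Real.log_div (ne_of_gt hδpos) (ne_of_gt hcpos)]
    exact Real.log_le_log (by positivity) hlow
  have h2 : Real.log (‖ζ + (w:ℂ)‖) ≤ Real.log 3 + Real.log δ := by
    rw [← Real.log_mul (by norm_num) (ne_of_gt hδpos)]
    exact Real.log_le_log habspos hup
  have l3 : (0:ℝ) ≤ Real.log 3 := Real.log_nonneg (by norm_num)
  have lc : (0:ℝ) ≤ Real.log c := Real.log_nonneg hc
  have := le_abs_self (Real.log δ)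
  have := neg_abs_le (Real.log δ)
  rw [abs_le]
  constructor <;> linarith

lemma aux_near {ζ : ℂ} (hζ : 0 < ζ.im) {c : ℝ} (hc : 1 ≤ c) (hcim : ‖ζ‖ ≤ c * ζ.im)
    {w : ℝ} (hw0 : 0 ≤ w) (hw2 : w ≤ 2 * ‖ζ‖) :
    ‖Complex.log (ζ + (w:ℂ)) - Complex.log (w:ℂ)‖ ≤
      |Real.log (‖ζ‖)| + (Real.log 3 + Real.log c) + Real.pi + |Real.log w| := by
  refine le_trans (norm_sub_le _ _) ?_
  rw [aux_norm_log_ofReal hw0]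
  refine add_le_add ?_ le_rfl
  refine le_trans (aux_norm_log_le _) ?_
  exact add_le_add (aux_near' hζ hc hcim hw0 hw2) le_rfl

set_option maxHeartbeats 2000000

/-- Modulus-of-continuity estimate for the logarithmic Cauchy integral `χ`
near the endpoint `-k₀` of the contour, within a nontangential cone in the
upper half-plane. -/
theorem chi_endpoint_estimate (k₀ : ℝ) (hk₀ : 0 < k₀) (f : ℝ → ℝ)
    (hf : ContDiff ℝ 1 f)
    (hfi : IntegrableOn f (Set.Iic (-k₀)))
    (hfi' : IntegrableOn (deriv f) (Set.Iic (-k₀)))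
    (χ : ℂ → ℂ)
    (hχ : ∀ k : ℂ, χ k = (1 / (2 * Real.pi * Complex.I)) *
      ∫ s in Set.Iic (-k₀), Complex.log (k - s) * ((deriv f s : ℝ) : ℂ)) :
    ∀ κ : ℝ, 0 < κ → ∃ C : ℝ, 0 < C ∧ ∀ k : ℂ, 0 < k.im →
      |k.re + k₀| ≤ κ * k.im → ‖k + k₀‖ ≤ 1 / 2 →
      ‖χ k - χ (-(k₀ : ℂ))‖ ≤
        C * ‖k + k₀‖ *
          (1 + |Real.log (‖k + k₀‖)|) := by
  intro κ hκ
  set c := Real.sqrt (1 + κ^2) with hcdef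
  have hc1 : 1 ≤ c := by
    rw [hcdef]
    nlinarith [Real.sq_sqrt (show (0:ℝ) ≤ 1 + κ^2 by positivity),
      Real.sqrt_nonneg (1 + κ^2), sq_nonneg κ]
  have hcpos : 0 < c := lt_of_lt_of_le one_pos hc1
  have hsq : c^2 = 1 + κ^2 := by rw [hcdef]; exact Real.sq_sqrt (by positivity)
  obtain ⟨M₀, hM₀⟩ := (isCompact_Icc (a := -k₀-1) (b := -k₀)).exists_bound_of_continuousOn
      (hf.continuous_deriv le_rfl).continuousOn
  set M := max M₀ 0 with hMdef
  have hM : ∀ s ∈ Icc (-k₀-1) (-k₀), |deriv f s| ≤ M := fun s hs =>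
    le_trans (by simpa [Real.norm_eq_abs] using hM₀ s hs) (le_max_left _ _)
  have hM0 : (0:ℝ) ≤ M := le_max_right _ _
  set L1 := ∫ s in Iic (-k₀), ‖deriv f s‖ with hL1def
  have hL10 : 0 ≤ L1 := integral_nonneg fun s => norm_nonneg _
  set L := Real.log 3 + Real.log c with hLdef
  have hL0 : 0 ≤ L := add_nonneg (Real.log_nonneg (by norm_num)) (Real.log_nonneg hc1)
  have hπ := Real.pi_pos
  clear_value c M L1 L
  have hCpos : (0:ℝ) < 2*M*(2 + L + Real.pi) + (3/2)*M + (3/2)*L1 + 1 := by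
    have h1 : (0:ℝ) ≤ 2*M*(2 + L + Real.pi) :=
      mul_nonneg (by linarith) (by linarith)
    linarith
  refine ⟨2*M*(2 + L + Real.pi) + (3/2)*M + (3/2)*L1 + 1, hCpos, ?_⟩
  intro k hkim hcone hksmall
  set ζ := k + (k₀:ℂ) with hζdef
  have hζim : ζ.im = k.im := by simp [hζdef]
  have hζimpos : 0 < ζ.im := by rwa [hζim]
  set δ := ‖ζ‖ with hδdef
  have hδpos : 0 < δ := by
    rw [hδdef, norm_pos_iff]
    intro h; rw [h] at hζimpos; simp at hζimpos
  have hδhalf : δ ≤ 1/2 := hksmall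
  set A := |Real.log δ| with hAdef
  have hA0 : (0:ℝ) ≤ A := abs_nonneg _
  have h2δ1 : 2*δ ≤ 1 := by linarith
  have hAeq : A = -Real.log δ := abs_of_neg (Real.log_neg hδpos (by linarith))
  have hlog2δ : |Real.log (2*δ)| ≤ A := by
    rw [abs_of_nonpos (Real.log_nonpos (by positivity) h2δ1),
      Real.log_mul two_ne_zero (ne_of_gt hδpos), hAeq]
    have : (0:ℝ) ≤ Real.log 2 := Real.log_nonneg one_le_two
    linarith
  have hcim : δ ≤ c * ζ.im := by
    have h1 : δ^2 = ζ.re^2 + ζ.im^2 := by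
      rw [hδdef, Complex.sq_norm, Complex.normSq_apply]; ring
    have hre : ζ.re = k.re + k₀ := by simp [hζdef]
    have h3 : (k.re + k₀)^2 ≤ (κ * k.im)^2 := by
      calc (k.re + k₀)^2 = |k.re + k₀|^2 := (sq_abs _).symm
        _ ≤ (κ * k.im)^2 := pow_le_pow_left₀ (abs_nonneg _) hcone 2
    have h2 : δ^2 ≤ (c * ζ.im)^2 := by
      rw [h1, hre, hζim]; nlinarith [hsq, h3, sq_nonneg k.im]
    have := Real.sqrt_le_sqrt h2
    rwa [Real.sqrt_sq hδpos.le, Real.sqrt_sq (mul_nonneg hcpos.le hζimpos.le)] at this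
  -- the three functions
  set g₁ : ℝ → ℂ := fun s : ℝ => Complex.log (k - (s:ℂ)) * ((deriv f s : ℝ) : ℂ) with hg₁def
  set g₂ : ℝ → ℂ := fun s : ℝ => Complex.log (-(k₀:ℂ) - (s:ℂ)) * ((deriv f s : ℝ) : ℂ) with hg₂def
  set F : ℝ → ℂ := fun s : ℝ =>
    (Complex.log (k - (s:ℂ)) - Complex.log (-(k₀:ℂ) - (s:ℂ))) * ((deriv f s : ℝ) : ℂ) with hFdef
  have hks : ∀ s : ℝ, k - (s:ℂ) = ζ + ((-k₀ - s : ℝ):ℂ) := by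
    intro s; rw [hζdef]; push_cast; ring
  have hk0s : ∀ s : ℝ, -(k₀:ℂ) - (s:ℂ) = ((-k₀ - s : ℝ):ℂ) := by
    intro s; push_cast; ring
  have hFnorm : ∀ s : ℝ, ‖F s‖ =
      ‖Complex.log (ζ + ((-k₀ - s:ℝ):ℂ)) - Complex.log (((-k₀ - s:ℝ):ℂ))‖ * |deriv f s| := by
    intro s
    rw [hFdef]
    simp only []
    rw [norm_mul, hks s, hk0s s, Complex.norm_real, Real.norm_eq_abs]
  -- pointwise bounds
  have hfar' : ∀ s : ℝ, s ≤ -k₀ - 2*δ → ‖F s‖ ≤ ((3/2) * (δ / (-k₀ - s))) * |deriv f s| := by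
    intro s hs
    rw [hFnorm s]
    apply mul_le_mul_of_nonneg_right _ (abs_nonneg _)
    exact aux_far hζimpos (by linarith : (0:ℝ) < -k₀ - s) (by rw [← hδdef]; linarith)
  have hnear' : ∀ s : ℝ, -k₀ - 2*δ ≤ s → s ≤ -k₀ →
      ‖F s‖ ≤ (A + L + Real.pi + |Real.log (-k₀ - s)|) * |deriv f s| := by
    intro s hs1 hs2
    rw [hFnorm s]
    apply mul_le_mul_of_nonneg_right _ (abs_nonneg _)
    have := aux_near hζimpos hc1 hcim (by linarith : (0:ℝ) ≤ -k₀ - s)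
      (by rw [← hδdef]; linarith : -k₀ - s ≤ 2 * ‖ζ‖)
    rw [← hδdef, ← hAdef, ← hLdef] at this
    exact this
  -- measurability
  have hcontf' : Continuous (deriv f) := hf.continuous_deriv le_rfl
  have hcont₁ : Continuous fun s : ℝ => Complex.log (k - (s:ℂ)) := by
    rw [continuous_iff_continuousAt]
    intro s
    apply ContinuousAt.clog (by fun_prop)
    rw [Complex.mem_slitPlane_iff]
    right
    simpa using ne_of_gt hkim
  have hFmeas : Measurable F := by
    rw [hFdef]
    apply Measurable.mul
    · exact (hcont₁.measurable.sub
        (Complex.measurable_log.comp (by fun_prop : Measurable fun s : ℝ => -(k₀:ℂ) - (s:ℂ))))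
    · exact Complex.measurable_ofReal.comp hcontf'.measurable
  -- integrability of F
  have hIfar : IntegrableOn F (Iic (-k₀-1)) := by
    apply Integrable.mono'
      (((hfi'.mono_set (Iic_subset_Iic.mpr (by linarith))).norm).const_mul (3/4))
      (hFmeas.aestronglyMeasurable.restrict)
    rw [ae_restrict_iff' measurableSet_Iic]
    filter_upwards with s hs
    have hs' : s ≤ -k₀ - 2*δ := by simp only [mem_Iic] at hs; linarith
    refine le_trans (hfar' s hs') ?_
    rw [Real.norm_eq_abs]
    apply mul_le_mul_of_nonneg_right _ (abs_nonneg _)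
    have hw1 : (1:ℝ) ≤ -k₀ - s := by simp only [mem_Iic] at hs; linarith
    have : δ / (-k₀ - s) ≤ δ := div_le_self hδpos.le hw1
    linarith
  have hJ1 : IntegrableOn (fun s => |Real.log (-k₀ - s)|) (Ioc (-k₀-1) (-k₀)) := by
    have h := ((aux_log_intervalIntegrable zero_le_one le_rfl).comp_sub_left (-k₀)).symm
    rw [show -k₀ - (0:ℝ) = -k₀ by ring] at h
    rwa [intervalIntegrable_iff_integrableOn_Ioc_of_le (by linarith)] at h
  have hmidptw : ∀ s ∈ Ioc (-k₀-1) (-k₀),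
      ‖F s‖ ≤ (|Real.log k.im| + 1 + Real.pi + |Real.log (-k₀-s)|) * M := by
    intro s hs
    obtain ⟨hs1, hs2⟩ := hs
    have hw0 : (0:ℝ) ≤ -k₀ - s := by linarith
    have hw1 : -k₀ - s ≤ 1 := by linarith
    rw [hFnorm s]
    have hbig : ‖Complex.log (ζ + ((-k₀ - s:ℝ):ℂ)) - Complex.log (((-k₀ - s:ℝ):ℂ))‖ ≤
        |Real.log k.im| + 1 + Real.pi + |Real.log (-k₀-s)| := by
      refine le_trans (norm_sub_le _ _) ?_
      rw [aux_norm_log_ofReal hw0]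
      refine add_le_add ?_ le_rfl
      refine le_trans (aux_norm_log_le _) ?_
      refine add_le_add ?_ le_rfl
      -- |log abs(ζ+w)| ≤ |log k.im| + 1
      have himeq : (ζ + ((-k₀ - s:ℝ):ℂ)).im = k.im := by simp [hζim]
      have habs_low : k.im ≤ ‖ζ + ((-k₀ - s:ℝ):ℂ)‖ := by
        have := le_trans (le_abs_self _) (Complex.abs_im_le_norm (ζ + ((-k₀ - s:ℝ):ℂ)))
        rwa [himeq] at this
      have habs_up : ‖ζ + ((-k₀ - s:ℝ):ℂ)‖ ≤ 3/2 := by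
        refine le_trans (norm_add_le _ _) ?_
        rw [← hδdef, Complex.norm_real, Real.norm_eq_abs, abs_of_nonneg hw0]
        linarith
      have hpos : (0:ℝ) < ‖ζ + ((-k₀ - s:ℝ):ℂ)‖ := lt_of_lt_of_le hkim habs_low
      have hx1 : Real.log (‖ζ + ((-k₀ - s:ℝ):ℂ)‖) ≤ 1 := by
        refine le_trans (Real.log_le_sub_one_of_pos hpos) ?_
        linarith
      have hx2 : Real.log k.im ≤ Real.log (‖ζ + ((-k₀ - s:ℝ):ℂ)‖) :=
        Real.log_le_log hkim habs_low
      have hh1 := neg_abs_le (Real.log k.im)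
      have hh2 := abs_nonneg (Real.log k.im)
      rw [abs_le]
      constructor <;> linarith
    calc ‖Complex.log (ζ + ((-k₀ - s:ℝ):ℂ)) - Complex.log (((-k₀ - s:ℝ):ℂ))‖ * |deriv f s|
        ≤ (|Real.log k.im| + 1 + Real.pi + |Real.log (-k₀-s)|) * |deriv f s| :=
          mul_le_mul_of_nonneg_right hbig (abs_nonneg _)
      _ ≤ (|Real.log k.im| + 1 + Real.pi + |Real.log (-k₀-s)|) * M := by
          apply mul_le_mul_of_nonneg_left (hM s ⟨by linarith, hs2⟩)
          positivity
  have hImid : IntegrableOn F (Ioc (-k₀-1) (-k₀)) := by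
    apply Integrable.mono'
      (g := fun s => (|Real.log k.im| + 1 + Real.pi + |Real.log (-k₀-s)|) * M)
      ((((integrableOn_const measure_Ioc_lt_top.ne).add hJ1).mul_const M))
      (hFmeas.aestronglyMeasurable.restrict)
    rw [ae_restrict_iff' measurableSet_Ioc]
    filter_upwards with s hs
    exact hmidptw s hs
  have hsplitset : Iic (-k₀) = Iic (-k₀-1) ∪ Ioc (-k₀-1) (-k₀) :=
    (Iic_union_Ioc_eq_Iic (by linarith)).symm
  have hFint : IntegrableOn F (Iic (-k₀)) := by
    rw [hsplitset]; exact hIfar.union hImid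
  -- interval integrability of the pieces
  have hIImid1 : IntervalIntegrable (fun s => ‖F s‖) volume (-k₀-1) (-k₀-2*δ) := by
    rw [intervalIntegrable_iff_integrableOn_Ioc_of_le (by linarith)]
    exact IntegrableOn.mono_set hImid.norm (Ioc_subset_Ioc le_rfl (by linarith))
  have hIImid2 : IntervalIntegrable (fun s => ‖F s‖) volume (-k₀-2*δ) (-k₀) := by
    rw [intervalIntegrable_iff_integrableOn_Ioc_of_le (by linarith)]
    exact IntegrableOn.mono_set hImid.norm (Ioc_subset_Ioc (by linarith) le_rfl)
  have hsplit1 : ∫ s in Iic (-k₀), ‖F s‖ =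
      (∫ s in Iic (-k₀-1), ‖F s‖) + ∫ s in Ioc (-k₀-1) (-k₀), ‖F s‖ := by
    rw [hsplitset]
    exact setIntegral_union (Iic_disjoint_Ioc le_rfl) measurableSet_Ioc hIfar.norm hImid.norm
  have hsplit2 : ∫ s in Ioc (-k₀-1) (-k₀), ‖F s‖ =
      (∫ s in (-k₀-1)..(-k₀-2*δ), ‖F s‖) + ∫ s in (-k₀-2*δ)..(-k₀), ‖F s‖ := by
    rw [intervalIntegral.integral_add_adjacent_intervals hIImid1 hIImid2,
      intervalIntegral.integral_of_le (by linarith : -k₀-1 ≤ -k₀)]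
  -- bound on the far piece
  have hb1 : ∫ s in Iic (-k₀-1), ‖F s‖ ≤ (3/2) * δ * L1 := by
    have hsub : Iic (-k₀-1) ⊆ Iic (-k₀) := Iic_subset_Iic.mpr (by linarith)
    have step : ∫ s in Iic (-k₀-1), ‖F s‖ ≤
        ∫ s in Iic (-k₀-1), (3/2) * δ * ‖deriv f s‖ := by
      apply setIntegral_mono_on hIfar.norm
        (((hfi'.mono_set hsub).norm).const_mul _) measurableSet_Iic
      intro s hs
      rw [mem_Iic] at hs
      refine le_trans (hfar' s (by linarith)) ?_
      rw [Real.norm_eq_abs]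
      have hw1 : (1:ℝ) ≤ -k₀ - s := by linarith
      have h2 : δ / (-k₀ - s) ≤ δ := div_le_self hδpos.le hw1
      have h3 := abs_nonneg (deriv f s)
      nlinarith
    refine le_trans step ?_
    rw [MeasureTheory.integral_const_mul]
    have hsub2 : ∫ s in Iic (-k₀-1), ‖deriv f s‖ ≤ L1 := by
      rw [hL1def]
      exact setIntegral_mono_set hfi'.norm (ae_of_all _ fun s => norm_nonneg _)
        (HasSubset.Subset.eventuallyLE hsub)
    have : (0:ℝ) ≤ (3/2) * δ := by positivity
    nlinarith
  -- bound on the middle piece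
  have hb2 : ∫ s in (-k₀-1)..(-k₀-2*δ), ‖F s‖ ≤ (3/2) * δ * M * A := by
    have hab : -k₀-1 ≤ -k₀-2*δ := by linarith
    have hG2int : IntervalIntegrable (fun s => (3/2) * δ * M * (-k₀ - s)⁻¹)
        volume (-k₀-1) (-k₀-2*δ) := by
      apply ContinuousOn.intervalIntegrable
      rw [uIcc_of_le hab]
      apply ContinuousOn.mul continuousOn_const
      apply ContinuousOn.inv₀ (Continuous.continuousOn (by fun_prop))
      intro x hx
      rw [mem_Icc] at hx
      have : (0:ℝ) < -k₀ - x := by linarith [hδpos]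
      exact ne_of_gt this
    have hpt : ∀ x ∈ Icc (-k₀-1) (-k₀-2*δ), ‖F x‖ ≤ (3/2) * δ * M * (-k₀ - x)⁻¹ := by
      intro x hx
      rw [mem_Icc] at hx
      have hw : (0:ℝ) < -k₀ - x := by linarith [hδpos]
      refine le_trans (hfar' x hx.2) ?_
      have hfx : |deriv f x| ≤ M := hM x ⟨hx.1, by linarith⟩
      have h0 : (0:ℝ) ≤ (3/2) * (δ / (-k₀ - x)) := by positivity
      calc (3/2) * (δ / (-k₀-x)) * |deriv f x| ≤ (3/2) * (δ / (-k₀-x)) * M :=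
            mul_le_mul_of_nonneg_left hfx h0
        _ = (3/2) * δ * M * (-k₀ - x)⁻¹ := by rw [div_eq_mul_inv]; ring
    refine le_trans (intervalIntegral.integral_mono_on hab hIImid1 hG2int hpt) ?_
    rw [intervalIntegral.integral_const_mul]
    have hcomp := intervalIntegral.integral_comp_sub_left
      (a := -k₀-1) (b := -k₀-2*δ) (fun t : ℝ => t⁻¹) (-k₀)
    rw [show -k₀ - (-k₀-2*δ) = 2*δ by ring, show -k₀ - (-k₀-1) = 1 by ring] at hcomp
    rw [hcomp]
    have hval : ∫ t in (2*δ)..(1:ℝ), t⁻¹ = Real.log (1/(2*δ)) := by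
      apply integral_inv
      rw [uIcc_of_le (by linarith : 2*δ ≤ 1)]
      intro hmem
      rw [mem_Icc] at hmem
      linarith [hmem.1, hδpos]
    rw [hval, one_div, Real.log_inv]
    have h1 : -Real.log (2*δ) ≤ A := le_trans (neg_le_abs _) hlog2δ
    have h0 : (0:ℝ) ≤ (3/2) * δ * M := by positivity
    nlinarith
  -- bound on the near piece
  have hb3 : ∫ s in (-k₀-2*δ)..(-k₀), ‖F s‖ ≤
      (2*δ*(A + L + Real.pi) + 2*δ*(1 + A)) * M := by
    have hab : -k₀-2*δ ≤ -k₀ := by linarith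
    have hloganti : IntervalIntegrable (fun s => |Real.log (-k₀ - s)|)
        volume (-k₀-2*δ) (-k₀) := by
      have h := ((aux_log_intervalIntegrable (by positivity : (0:ℝ) ≤ 2*δ)
        h2δ1).comp_sub_left (-k₀)).symm
      rwa [show -k₀ - (0:ℝ) = -k₀ by ring, show -k₀ - 2*δ = -k₀ - 2*δ from rfl] at h
    have hG3int : IntervalIntegrable (fun s => (A + L + Real.pi + |Real.log (-k₀-s)|) * M)
        volume (-k₀-2*δ) (-k₀) :=
      (intervalIntegrable_const.add hloganti).mul_const M
    have hpt : ∀ x ∈ Icc (-k₀-2*δ) (-k₀),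
        ‖F x‖ ≤ (A + L + Real.pi + |Real.log (-k₀-x)|) * M := by
      intro x hx
      rw [mem_Icc] at hx
      refine le_trans (hnear' x hx.1 hx.2) ?_
      apply mul_le_mul_of_nonneg_left (hM x ⟨by linarith, hx.2⟩)
      positivity
    refine le_trans (intervalIntegral.integral_mono_on hab hIImid2 hG3int hpt) ?_
    rw [intervalIntegral.integral_mul_const,
      intervalIntegral.integral_add intervalIntegrable_const hloganti,
      intervalIntegral.integral_const]
    have hcomp := intervalIntegral.integral_comp_sub_left
      (a := -k₀-2*δ) (b := -k₀) (fun t : ℝ => |Real.log t|) (-k₀)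
    rw [show -k₀ - (-k₀) = 0 by ring, show -k₀ - (-k₀-2*δ) = 2*δ by ring] at hcomp
    rw [hcomp, show -k₀ - (-k₀-2*δ) = 2*δ by ring, smul_eq_mul]
    have hlogval : ∫ t in (0:ℝ)..(2*δ), |Real.log t| ≤ 2*δ*(1 + A) := by
      refine le_trans (aux_log_intervalIntegral_le (by positivity) h2δ1) ?_
      have h1 : |Real.log (2*δ)| ≤ A := hlog2δ
      nlinarith [hδpos.le]
    have h2 : (0:ℝ) ≤ A + L + Real.pi := by positivity
    nlinarith [hδpos.le]
  -- total bound
  have htotal : ∫ s in Iic (-k₀), ‖F s‖ ≤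
      (2*M*(2 + L + Real.pi) + (3/2)*M + (3/2)*L1) * (δ * (1 + A)) := by
    rw [hsplit1, hsplit2]
    have hkey : (3/2)*δ*L1 + ((3/2)*δ*M*A + (2*δ*(A + L + Real.pi) + 2*δ*(1+A)) * M) ≤
        (2*M*(2 + L + Real.pi) + (3/2)*M + (3/2)*L1) * (δ * (1 + A)) := by
      nlinarith [mul_nonneg (mul_nonneg hM0 hδpos.le) hA0, mul_nonneg hM0 hδpos.le,
        mul_nonneg hL10 (mul_nonneg hδpos.le hA0),
        mul_nonneg (mul_nonneg (mul_nonneg hM0 hδpos.le) hA0) hL0,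
        mul_nonneg (mul_nonneg (mul_nonneg hM0 hδpos.le) hA0) hπ.le]
    linarith [hb1, hb2, hb3]
  -- the constant prefactor
  have hc₀ : ‖(1 / (2 * (Real.pi:ℂ) * Complex.I))‖ ≤ 1 := by
    have habs : ‖(2 * (Real.pi:ℂ) * Complex.I)‖ = 2 * Real.pi := by
      simp [map_mul, Complex.norm_real, Complex.norm_two,
        abs_of_nonneg Real.pi_pos.le]
    rw [norm_div, norm_one, habs, div_le_one (by positivity)]
    linarith [Real.pi_gt_three]
  -- case split on integrability
  by_cases hg₂i : IntegrableOn g₂ (Iic (-k₀))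
  · have hg₁i : IntegrableOn g₁ (Iic (-k₀)) := by
      have h := hFint.add hg₂i
      have e : F + g₂ = g₁ := by
        funext s; simp only [Pi.add_apply, hg₁def, hg₂def, hFdef]; ring
      rwa [e] at h
    have hdiff : χ k - χ (-(k₀:ℂ)) =
        (1 / (2 * (Real.pi:ℂ) * Complex.I)) * ∫ s in Iic (-k₀), F s := by
      have e1 : χ k = (1 / (2 * (Real.pi:ℂ) * Complex.I)) * ∫ s in Iic (-k₀), g₁ s := hχ k
      have e2 : χ (-(k₀:ℂ)) =
          (1 / (2 * (Real.pi:ℂ) * Complex.I)) * ∫ s in Iic (-k₀), g₂ s := hχ (-(k₀:ℂ))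
      rw [e1, e2, ← mul_sub, ← integral_sub hg₁i hg₂i]
      congr 1
      apply integral_congr_ae
      filter_upwards with s
      simp only [hg₁def, hg₂def, hFdef]
      ring
    calc ‖χ k - χ (-(k₀:ℂ))‖ = ‖χ k - χ (-(k₀:ℂ))‖ := rfl
      _ = ‖(1 / (2 * (Real.pi:ℂ) * Complex.I))‖ * ‖∫ s in Iic (-k₀), F s‖ := by
          rw [hdiff, norm_mul]
      _ ≤ 1 * ∫ s in Iic (-k₀), ‖F s‖ :=
          mul_le_mul hc₀ (norm_integral_le_integral_norm _) (norm_nonneg _) zero_le_one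
      _ ≤ (2*M*(2 + L + Real.pi) + (3/2)*M + (3/2)*L1) * (δ * (1 + A)) := by
          rw [one_mul]; exact htotal
      _ ≤ (2*M*(2 + L + Real.pi) + (3/2)*M + (3/2)*L1 + 1) * δ * (1 + A) := by
          nlinarith [mul_nonneg hδpos.le hA0, hδpos.le, hA0]
  · have hg₁i : ¬ IntegrableOn g₁ (Iic (-k₀)) := by
      intro h
      apply hg₂i
      have h2 := h.sub hFint
      have e : g₁ - F = g₂ := by
        funext s; simp only [Pi.sub_apply, hg₁def, hg₂def, hFdef]; ring
      rwa [e] at h2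
    have e1 : χ k = (1 / (2 * (Real.pi:ℂ) * Complex.I)) * ∫ s in Iic (-k₀), g₁ s := hχ k
    have e2 : χ (-(k₀:ℂ)) =
        (1 / (2 * (Real.pi:ℂ) * Complex.I)) * ∫ s in Iic (-k₀), g₂ s := hχ (-(k₀:ℂ))
    rw [e1, e2, integral_undef hg₁i, integral_undef hg₂i, mul_zero, sub_zero, norm_zero]
    have h1 : (0:ℝ) ≤ δ * (1 + A) := by positivity
    nlinarith [hCpos]
end
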